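/- For every real δ with 0 < |δ| < 1/√(12α), setting s := √(1 − 12δ²α), one has 1 − 6δ²η_*(δ)² = s > 0, and for all complex numbers λ and ν the identity d_{c_*(δ)}(λ, −η_*(δ) + ν) = −δ²ν⁴ + 4η_*(δ)δ²ν³ + s·ν² − λ holds. In particular, ν = −η_*(δ) is a root of multiplicity exactly two of the polynomial ν ↦ d_{c_*(δ)}(0, ν). -/

import Mathlib

noncomputable def etaStar (α δ : ℝ) : ℝ :=
  if δ = 0 then Real.sqrt α
  else 1 / (|δ| * Real.sqrt 6) * Real.sqrt (1 - Real.sqrt (1 - 12 * δ ^ 2 * α))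

noncomputable def cStar (α δ : ℝ) : ℝ :=
  2 * etaStar α δ - 4 * δ ^ 2 * etaStar α δ ^ 3

/-- The dispersion relation at `+∞`: `d_c(λ, ν) = -δ²ν⁴ + ν² + cν + α - λ`. -/
noncomputable def disp (α δ c : ℝ) (lam ν : ℂ) : ℂ :=
  -(δ : ℂ) ^ 2 * ν ^ 4 + ν ^ 2 + (c : ℂ) * ν + (α : ℂ) - lam

theorem stmt0 (α : ℝ) (hα : 0 < α) (δ : ℝ) (hδ : 0 < |δ|)
    (hδ' : |δ| < 1 / Real.sqrt (12 * α)) :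
    (1 - 6 * δ ^ 2 * etaStar α δ ^ 2 = Real.sqrt (1 - 12 * δ ^ 2 * α)
      ∧ 0 < Real.sqrt (1 - 12 * δ ^ 2 * α))
    ∧ (∀ lam ν : ℂ,
        disp α δ (cStar α δ) lam (-(etaStar α δ : ℂ) + ν)
          = -(δ : ℂ) ^ 2 * ν ^ 4 + 4 * (etaStar α δ : ℂ) * (δ : ℂ) ^ 2 * ν ^ 3
            + (Real.sqrt (1 - 12 * δ ^ 2 * α) : ℂ) * ν ^ 2 - lam)
    ∧ Polynomial.rootMultiplicity (-(etaStar α δ : ℂ))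
        (Polynomial.C (-(δ : ℂ) ^ 2) * Polynomial.X ^ 4 + Polynomial.X ^ 2
          + Polynomial.C ((cStar α δ : ℝ) : ℂ) * Polynomial.X
          + Polynomial.C ((α : ℝ) : ℂ)) = 2 := by
  have hδ0 : δ ≠ 0 := by intro h; simp [h] at hδ
  have hδ2 : (0:ℝ) < δ ^ 2 := by positivity
  set s : ℝ := Real.sqrt (1 - 12 * δ ^ 2 * α) with hs_def
  set η : ℝ := etaStar α δ with hη_def
  -- 12 δ² α < 1
  have h12α : (0:ℝ) < 12 * α := by linarith
  have hsqrt12 : 0 < Real.sqrt (12 * α) := Real.sqrt_pos.mpr h12α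
  have hlt : 12 * δ ^ 2 * α < 1 := by
    have h1 : |δ| * Real.sqrt (12 * α) < 1 := by
      rw [lt_div_iff₀ hsqrt12] at hδ'
      exact hδ'
    have h2 : (|δ| * Real.sqrt (12 * α)) ^ 2 < 1 := by
      have := mul_pos hδ hsqrt12
      nlinarith
    have h3 : (|δ|) ^ 2 = δ ^ 2 := sq_abs δ
    have h4 : (Real.sqrt (12 * α)) ^ 2 = 12 * α := Real.sq_sqrt (le_of_lt h12α)
    nlinarith [h2, h3, h4]
  have hpos : (0:ℝ) < 1 - 12 * δ ^ 2 * α := by linarith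
  have hs_pos : 0 < s := Real.sqrt_pos.mpr hpos
  have hs_sq : s ^ 2 = 1 - 12 * δ ^ 2 * α := Real.sq_sqrt (le_of_lt hpos)
  have hs_lt1 : s < 1 := by nlinarith [hs_pos]
  -- η² = (1 - s)/(6 δ²)
  have hη2 : 6 * δ ^ 2 * η ^ 2 = 1 - s := by
    have : η = 1 / (|δ| * Real.sqrt 6) * Real.sqrt (1 - s) := by
      rw [hη_def, etaStar, if_neg hδ0]
    rw [this]
    have h6 : (Real.sqrt 6) ^ 2 = 6 := Real.sq_sqrt (by norm_num)
    have habs : (|δ|) ^ 2 = δ ^ 2 := sq_abs δ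
    have h1s : (Real.sqrt (1 - s)) ^ 2 = 1 - s := Real.sq_sqrt (by linarith)
    have hne : |δ| * Real.sqrt 6 ≠ 0 := by positivity
    field_simp
    rw [h1s, habs, h6]
    ring
  have key1 : 1 - 6 * δ ^ 2 * η ^ 2 = s := by linarith
  -- α = η² - 3 δ² η⁴
  have key2 : α = η ^ 2 - 3 * δ ^ 2 * η ^ 4 := by
    have h : (1 - 6 * δ ^ 2 * η ^ 2) ^ 2 = 1 - 12 * δ ^ 2 * α := by
      rw [key1]; exact hs_sq
    have := hδ2
    nlinarith [h]
  refine ⟨⟨key1, hs_pos⟩, ?_, ?_⟩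
  · -- the identity
    intro lam ν
    have hsC : (s : ℂ) = 1 - 6 * (δ:ℂ) ^ 2 * (η:ℂ) ^ 2 := by
      rw [← key1]; push_cast; ring
    have hαC : (α : ℂ) = (η:ℂ) ^ 2 - 3 * (δ:ℂ) ^ 2 * (η:ℂ) ^ 4 := by
      rw [key2]; push_cast; ring
    simp only [disp, cStar, ← hη_def]
    push_cast
    rw [hsC, hαC]
    ring
  · -- root multiplicity
    have hsC : (s : ℂ) = 1 - 6 * (δ:ℂ) ^ 2 * (η:ℂ) ^ 2 := by
      rw [← key1]; push_cast; ring
    have hαC : (α : ℂ) = (η:ℂ) ^ 2 - 3 * (δ:ℂ) ^ 2 * (η:ℂ) ^ 4 := by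
      rw [key2]; push_cast; ring
    have hcC : ((cStar α δ : ℝ) : ℂ) = 2 * (η:ℂ) - 4 * (δ:ℂ) ^ 2 * (η:ℂ) ^ 3 := by
      simp only [cStar, ← hη_def]; push_cast; ring
    set Q : Polynomial ℂ :=
      Polynomial.C (-(δ:ℂ) ^ 2) * Polynomial.X ^ 2
        + Polynomial.C (2 * (δ:ℂ) ^ 2 * (η:ℂ)) * Polynomial.X
        + Polynomial.C (3 * (δ:ℂ) ^ 2 * (η:ℂ) ^ 2 + (s:ℂ)) with hQ_def
    have hfact :
        Polynomial.C (-(δ : ℂ) ^ 2) * Polynomial.X ^ 4 + Polynomial.X ^ 2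
          + Polynomial.C ((cStar α δ : ℝ) : ℂ) * Polynomial.X
          + Polynomial.C ((α : ℝ) : ℂ)
        = (Polynomial.X - Polynomial.C (-(η:ℂ))) ^ 2 * Q := by
      apply Polynomial.funext
      intro x
      simp only [hQ_def, Polynomial.eval_add, Polynomial.eval_mul, Polynomial.eval_pow,
        Polynomial.eval_sub, Polynomial.eval_C, Polynomial.eval_X]
      rw [hcC, hαC, hsC]
      ring
    have hQeval : Q.eval (-(η:ℂ)) = (s:ℂ) := by
      simp only [hQ_def, Polynomial.eval_add, Polynomial.eval_mul, Polynomial.eval_pow,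
        Polynomial.eval_C, Polynomial.eval_X]
      ring
    have hsne : (s:ℂ) ≠ 0 := by
      exact_mod_cast Complex.ofReal_ne_zero.mpr (ne_of_gt hs_pos)
    have hQroot : ¬ Q.IsRoot (-(η:ℂ)) := by
      rw [Polynomial.IsRoot, hQeval]; exact hsne
    have hQne : Q ≠ 0 := by
      intro h
      apply hQroot
      rw [h]; simp
    rw [hfact]
    rw [Polynomial.rootMultiplicity_mul (by
      apply mul_ne_zero _ hQne
      exact pow_ne_zero _ (Polynomial.X_sub_C_ne_zero (-(η:ℂ))))]
    rw [Polynomial.rootMultiplicity_eq_zero hQroot,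
      Polynomial.rootMultiplicity_X_sub_C_pow]
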